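/- Let U ⊆ ℝ be open, u : U → ℂ, l₁ ∈ ℂ, and let ψ : U → ℂ be twice differentiable with ψ(x) ≠ 0 for all x ∈ U and −ψ''(x) + u(x)ψ(x) = l₁ ψ(x) on U. Set w = ψ'/ψ, and for differentiable f define (Q f)(x) = f'(x) − w(x) f(x) and (Q^* f)(x) = −f'(x) − w(x) f(x). Then for every twice differentiable f : U → ℂ and every x ∈ U, (Q^*(Q f))(x) = −f''(x) + u(x) f(x) − l₁ f(x). -/

import Mathlib

theorem stmt_10 (U : Set ℝ) (hU : IsOpen U) (u : ℝ → ℂ) (l₁ : ℂ) (ψ : ℝ → ℂ)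
    (hψ1 : ∀ x ∈ U, DifferentiableAt ℝ ψ x)
    (hψ2 : ∀ x ∈ U, DifferentiableAt ℝ (deriv ψ) x)
    (hψne : ∀ x ∈ U, ψ x ≠ 0)
    (hψeq : ∀ x ∈ U, -(deriv (deriv ψ) x) + u x * ψ x = l₁ * ψ x)
    (f : ℝ → ℂ)
    (hf1 : ∀ x ∈ U, DifferentiableAt ℝ f x)
    (hf2 : ∀ x ∈ U, DifferentiableAt ℝ (deriv f) x) :
    ∀ x ∈ U,
      -(deriv (fun y => deriv f y - (deriv ψ y / ψ y) * f y) x)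
          - (deriv ψ x / ψ x) * (deriv f x - (deriv ψ x / ψ x) * f x)
        = -(deriv (deriv f) x) + u x * f x - l₁ * f x := by
  intro x hx
  have hψx := hψ1 x hx
  have hψ'x := hψ2 x hx
  have hne := hψne x hx
  have hfx := hf1 x hx
  have hf'x := hf2 x hx
  have h1 : DifferentiableAt ℝ (fun y => deriv ψ y / ψ y) x := hψ'x.div hψx hne
  have h2 : deriv (fun y => deriv f y - (deriv ψ y / ψ y) * f y) x
      = deriv (deriv f) x - (deriv (fun y => deriv ψ y / ψ y) x * f x
          + (deriv ψ x / ψ x) * deriv f x) := by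
    rw [deriv_fun_sub hf'x (h1.fun_mul hfx), deriv_fun_mul h1 hfx]
  have h3 : deriv (fun y => deriv ψ y / ψ y) x
      = (deriv (deriv ψ) x * ψ x - deriv ψ x * deriv ψ x) / (ψ x ^ 2) := by
    exact deriv_div hψ'x hψx hne
  have h4 : deriv (deriv ψ) x = u x * ψ x - l₁ * ψ x := by
    have := hψeq x hx; linear_combination -this
  rw [h2, h3, h4]
  field_simp
  ring
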